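/- Let n ≥ 1 and let m, c be nonnegative integers. There exists a subspace of type (m,c)_{[s]} in F₂^{2n} (i.e., an m-dimensional subspace whose Gram matrix under the symplectic inner product has rank 2c) if and only if 2c ≤ m ≤ n + c. -/

import Mathlib

noncomputable section

abbrev F2 : Type := ZMod 2
/-- `F₂^{2n}`, with elements written `(a | b)` for `a b : Fin n → F2`. -/
abbrev V2 (n : ℕ) : Type := (Fin n → F2) × (Fin n → F2)

/-- The symplectic inner product `((a|b), (a'|b'))ₛ = a·b'ᵀ + b·a'ᵀ` on `F₂^{2n}`,
as an `F₂`-bilinear form. -/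
def sympBilin (n : ℕ) : LinearMap.BilinForm F2 (V2 n) :=
  LinearMap.mk₂ F2 (fun u v => ∑ i, (u.1 i * v.2 i + u.2 i * v.1 i))
    (by
      intro m₁ m₂ n
      simp only [Prod.fst_add, Prod.snd_add, Pi.add_apply]
      rw [← Finset.sum_add_distrib]
      exact Finset.sum_congr rfl (by intros; ring))
    (by
      intro c m n
      simp only [Prod.smul_fst, Prod.smul_snd, Pi.smul_apply, smul_eq_mul, Finset.mul_sum]
      exact Finset.sum_congr rfl (by intros; ring))
    (by
      intro m n₁ n₂
      simp only [Prod.fst_add, Prod.snd_add, Pi.add_apply]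
      rw [← Finset.sum_add_distrib]
      exact Finset.sum_congr rfl (by intros; ring))
    (by
      intro c m n
      simp only [Prod.smul_fst, Prod.smul_snd, Pi.smul_apply, smul_eq_mul, Finset.mul_sum]
      exact Finset.sum_congr rfl (by intros; ring))

/-- The symplectic dual `V^{⊥s} = {w | ∀ v ∈ V, (v, w)ₛ = 0}` of a subspace `V ⊆ F₂^{2n}`. -/
def sympDual (n : ℕ) (V : Submodule F2 (V2 n)) : Submodule F2 (V2 n) :=
  (sympBilin n).orthogonal V

/-- `V ⊆ F₂^{2n}` is of type `(m, c)_{[s]}` if it is `m`-dimensional and the Gram matrix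
of a basis with respect to the symplectic inner product has `F₂`-rank `2c`. -/
def IsTypeS (n m c : ℕ) (V : Submodule F2 (V2 n)) : Prop :=
  Module.finrank F2 V = m ∧
  ∃ b : Module.Basis (Fin m) F2 V,
    (Matrix.of fun i j => sympBilin n (b i : V2 n) (b j : V2 n)).rank = 2 * c


section Aux
open Module Submodule

lemma symp_apply (n : ℕ) (u v : V2 n) :
    sympBilin n u v = ∑ i, (u.1 i * v.2 i + u.2 i * v.1 i) := rfl

lemma symp_symm (n : ℕ) (u v : V2 n) : sympBilin n u v = sympBilin n v u := by
  rw [symp_apply, symp_apply]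
  exact Finset.sum_congr rfl (by intros; ring)

lemma symp_alt (n : ℕ) (v : V2 n) : sympBilin n v v = 0 := by
  rw [symp_apply]
  apply Finset.sum_eq_zero
  intro i _
  rw [mul_comm]
  exact CharTwo.add_self_eq_zero _

lemma symp_isRefl (n : ℕ) : (sympBilin n).IsRefl := by
  intro u v h
  rw [symp_symm]; exact h

lemma symp_single_right (n : ℕ) (v : V2 n) (i : Fin n) :
    sympBilin n v (Pi.single i 1, 0) = v.2 i ∧ sympBilin n v (0, Pi.single i 1) = v.1 i := by
  constructor <;>
  · rw [symp_apply]
    rw [Finset.sum_eq_single i]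
    · simp [Pi.single_apply]
    · intro j _ hj; simp [Pi.single_apply, hj]
    · simp

lemma symp_nondeg (n : ℕ) : (sympBilin n).Nondegenerate := by
  refine (LinearMap.IsRefl.nondegenerate_iff_separatingLeft (symp_isRefl n)).mpr ?_
  intro v h
  ext i
  · simpa using (symp_single_right n v i).2.symm.trans (h _)
  · simpa using (symp_single_right n v i).1.symm.trans (h _)

lemma finrank_V2 (n : ℕ) : Module.finrank F2 (V2 n) = 2 * n := by
  simp [Module.finrank_prod]
  ring


lemma F2_cases : ∀ a : F2, a = 0 ∨ a = 1 := by decide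
lemma F2_add_self (a : F2) : a + a = 0 := by
  rcases F2_cases a with rfl | rfl <;> decide

lemma isotropic_le (n : ℕ) (W : Submodule F2 (V2 n))
    (h : ∀ x ∈ W, ∀ y ∈ W, sympBilin n x y = 0) :
    Module.finrank F2 W ≤ n := by
  have hWle : W ≤ (sympBilin n).orthogonal W := by
    intro x hx y hy
    exact h y hy x hx
  have h1 : finrank F2 ((sympBilin n).orthogonal W) = finrank F2 (V2 n) - finrank F2 W :=
    LinearMap.BilinForm.finrank_orthogonal (symp_nondeg n) W
  have h2 := Submodule.finrank_mono hWle
  have h3 : finrank F2 W ≤ finrank F2 (V2 n) := Submodule.finrank_le W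
  rw [h1, finrank_V2] at h2
  omega

lemma exists_isotropic (n : ℕ) (V : Submodule F2 (V2 n)) :
    ∃ W : Submodule F2 (V2 n), W ≤ V ∧ (∀ x ∈ W, ∀ y ∈ W, sympBilin n x y = 0) ∧
      finrank F2 V + finrank F2 (V ⊓ (sympBilin n).orthogonal V : Submodule F2 (V2 n))
        ≤ 2 * finrank F2 W := by
  set B := sympBilin n with hB
  generalize hd : finrank F2 V = d
  induction d using Nat.strong_induction_on generalizing V with
  | _ d ih =>
  by_cases hiso : ∀ x ∈ V, ∀ y ∈ V, B x y = 0
  · refine ⟨V, le_refl _, hiso, ?_⟩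
    have : V ⊓ B.orthogonal V = V := by
      rw [inf_eq_left]
      intro x hx y hy
      exact hiso y hy x hx
    rw [this, hd]; omega
  · push_neg at hiso
    obtain ⟨u, hu, v, hv, huv⟩ := hiso
    have huv1 : B u v = 1 := by
      rcases F2_cases (B u v) with h | h
      · exact absurd h huv
      · exact h
    have hvu1 : B v u = 1 := by rw [hB, symp_symm]; exact huv1
    have hBuu : B u u = 0 := symp_alt n u
    have hBvv : B v v = 0 := symp_alt n v
    set V' : Submodule F2 (V2 n) := V ⊓ LinearMap.ker (B u) ⊓ LinearMap.ker (B v) with hV'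
    have hV'le : V' ≤ V := le_trans inf_le_left inf_le_left
    have memV' : ∀ x, x ∈ V' ↔ x ∈ V ∧ B u x = 0 ∧ B v x = 0 := by
      intro x
      rw [hV', Submodule.mem_inf, Submodule.mem_inf, LinearMap.mem_ker, LinearMap.mem_ker,
        and_assoc]
    set g : ↥V →ₗ[F2] F2 × F2 :=
      LinearMap.prod ((B u).comp V.subtype) ((B v).comp V.subtype) with hg
    have hgapp : ∀ (y : V2 n) (hy : y ∈ V), g ⟨y, hy⟩ = (B u y, B v y) := fun _ _ => rfl
    have hrange : LinearMap.range g = ⊤ := by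
      rw [eq_top_iff]
      rintro ⟨a, b⟩ -
      have h1 : g ⟨v, hv⟩ = (1, 0) := by rw [hgapp, huv1, hBvv]
      have h2 : g ⟨u, hu⟩ = (0, 1) := by rw [hgapp, hBuu, hvu1]
      have h3 : (a, b) = a • ((1 :F2), (0:F2)) + b • ((0:F2), (1:F2)) := by
        simp [Prod.ext_iff]
      rw [h3]
      exact Submodule.add_mem _ (Submodule.smul_mem _ _ ⟨_, h1⟩)
        (Submodule.smul_mem _ _ ⟨_, h2⟩)
    have hkermap : (LinearMap.ker g).map V.subtype = V' := by
      ext x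
      rw [Submodule.mem_map]
      constructor
      · rintro ⟨⟨y, hy⟩, hky, rfl⟩
        rw [LinearMap.mem_ker, hgapp, Prod.mk_eq_zero] at hky
        exact (memV' y).mpr ⟨hy, hky.1, hky.2⟩
      · intro hx
        obtain ⟨hxV, h1, h2⟩ := (memV' x).mp hx
        exact ⟨⟨x, hxV⟩, by rw [LinearMap.mem_ker, hgapp, h1, h2, Prod.mk_eq_zero]; exact ⟨rfl, rfl⟩, rfl⟩
    have hrankV' : finrank F2 V' + 2 = d := by
      have h1 := LinearMap.finrank_range_add_finrank_ker g
      rw [hrange] at h1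
      have h2 : finrank F2 (⊤ : Submodule F2 (F2 × F2)) = 2 := by
        simp [finrank_top]
      rw [h2, hd] at h1
      have h3 : finrank F2 (LinearMap.ker g) = finrank F2 V' := by
        rw [← hkermap, Submodule.finrank_map_subtype_eq]
      omega
    -- radical equality
    have hradeq : V' ⊓ B.orthogonal V' = V ⊓ B.orthogonal V := by
      apply le_antisymm
      · rintro x ⟨hxV', hxO'⟩
        obtain ⟨hxV, hux, hvx⟩ := (memV' x).mp hxV'
        refine ⟨hxV, ?_⟩
        intro y hy
        have hy' : y + (B v y) • u + (B u y) • v ∈ V' := by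
          refine (memV' _).mpr ⟨V.add_mem (V.add_mem hy (V.smul_mem _ hu)) (V.smul_mem _ hv),
            ?_, ?_⟩
          · simp only [map_add, map_smul, smul_eq_mul, hBuu, huv1, mul_zero, mul_one, add_zero]
            exact F2_add_self _
          · simp only [map_add, map_smul, smul_eq_mul, hBvv, hvu1, mul_zero, mul_one, add_zero]
            exact F2_add_self _
        have h0 : B (y + (B v y) • u + (B u y) • v) x = 0 := hxO' _ hy'
        simp only [map_add, map_smul, LinearMap.add_apply, LinearMap.smul_apply, smul_eq_mul,
          hux, hvx, mul_zero, add_zero] at h0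
        exact h0
      · refine le_inf ?_ (le_trans inf_le_right (LinearMap.BilinForm.orthogonal_le hV'le))
        rintro x ⟨hxV, hxO⟩
        exact (memV' x).mpr ⟨hxV, hxO u hu, hxO v hv⟩
    obtain ⟨W', hW'le, hW'iso, hW'bd⟩ := ih (finrank F2 V') (by omega) V' rfl
    have huW' : u ∉ W' := by
      intro h
      have h2 := ((memV' u).mp (hW'le h)).2.2
      rw [hvu1] at h2
      exact one_ne_zero h2
    have hu0 : u ≠ 0 := by
      intro h
      rw [h] at huv1
      rw [map_zero, LinearMap.zero_apply] at huv1
      exact zero_ne_one huv1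
    refine ⟨W' ⊔ span F2 {u}, ?_, ?_, ?_⟩
    · exact sup_le (le_trans hW'le hV'le) ((span_singleton_le_iff_mem u V).mpr hu)
    · intro x hx y hy
      obtain ⟨a, ha, b, hb, rfl⟩ := Submodule.mem_sup.mp hx
      obtain ⟨a', ha', b', hb', rfl⟩ := Submodule.mem_sup.mp hy
      obtain ⟨k, rfl⟩ := mem_span_singleton.mp hb
      obtain ⟨k', rfl⟩ := mem_span_singleton.mp hb'
      have hBua : B u a = 0 := ((memV' a).mp (hW'le ha)).2.1
      have hBua' : B u a' = 0 := ((memV' a').mp (hW'le ha')).2.1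
      have hBau : B a u = 0 := by rw [hB, symp_symm]; exact hBua
      simp only [map_add, map_smul, LinearMap.add_apply, LinearMap.smul_apply, smul_eq_mul,
        hW'iso a ha a' ha', hBau, hBua', hBuu, mul_zero, add_zero, zero_add]
    · have hinf : W' ⊓ span F2 {u} = ⊥ := by
        rw [eq_bot_iff]
        rintro x ⟨hx1, hx2⟩
        obtain ⟨k, rfl⟩ := mem_span_singleton.mp hx2
        rcases F2_cases k with rfl | rfl
        · rw [zero_smul]; exact Submodule.zero_mem _
        · rw [one_smul] at hx1; exact absurd hx1 huW'
      have hsum := Submodule.finrank_sup_add_finrank_inf_eq W' (span F2 {u})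
      rw [hinf, finrank_bot, finrank_span_singleton hu0, add_zero] at hsum
      rw [hradeq] at hW'bd
      omega


set_option maxHeartbeats 1000000 in
lemma gram_rank (n m : ℕ) (V : Submodule F2 (V2 n)) (b : Basis (Fin m) F2 V) :
    (Matrix.of fun i j => sympBilin n (b i : V2 n) (b j : V2 n)).rank
      + finrank F2 (V ⊓ (sympBilin n).orthogonal V : Submodule F2 (V2 n)) = m := by
  set B := sympBilin n with hB
  set B' : ↥V →ₗ[F2] ↥V →ₗ[F2] F2 := B.compl₁₂ V.subtype V.subtype with hB'
  have hB'app : ∀ (x y : ↥V), B' x y = B (x : V2 n) (y : V2 n) := fun x y => rfl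
  set M : Matrix (Fin m) (Fin m) F2 :=
    Matrix.of fun i j => B (b i : V2 n) (b j : V2 n) with hM
  set L : (↥V →ₗ[F2] F2) →ₗ[F2] (Fin m → F2) :=
    LinearMap.pi (fun i => LinearMap.applyₗ (b i)) with hL
  have hLapp : ∀ (f : ↥V →ₗ[F2] F2) (i : Fin m), L f i = f (b i) := fun f i => rfl
  have hLinj : Function.Injective L := by
    rw [← LinearMap.ker_eq_bot]
    rw [eq_bot_iff]
    intro f hf
    rw [LinearMap.mem_ker] at hf
    have : f = 0 := b.ext fun i => by
      rw [← hLapp, hf]; rfl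
    simpa using this
  have key : M.mulVecLin =
      (L.comp B').comp (b.equivFun.symm : (Fin m → F2) ≃ₗ[F2] ↥V).toLinearMap := by
    apply LinearMap.ext
    intro x
    funext i
    rw [Matrix.mulVecLin_apply]
    rw [LinearMap.comp_apply, LinearMap.comp_apply, LinearEquiv.coe_coe,
      Basis.equivFun_symm_apply, hLapp, map_sum, LinearMap.sum_apply]
    have hl : M.mulVec x i = ∑ j, M i j * x j := by
      rw [Matrix.mulVec, dotProduct]
    rw [hl]
    apply Finset.sum_congr rfl
    intro j _
    rw [map_smul, LinearMap.smul_apply, smul_eq_mul, hB'app, hM]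
    rw [Matrix.of_apply]
    rw [mul_comm]
    congr 1
    exact symp_symm n _ _
  -- now ranks
  have hrank : M.rank = finrank F2 (LinearMap.range M.mulVecLin) := rfl
  have h2 : LinearMap.range M.mulVecLin = LinearMap.range (L.comp B') := by
    rw [key, LinearMap.range_comp_of_range_eq_top]
    exact LinearEquiv.range _
  have h3 : LinearMap.range (L.comp B') = (LinearMap.range B').map L := LinearMap.range_comp _ _
  have h4 : finrank F2 ((LinearMap.range B').map L) = finrank F2 (LinearMap.range B') :=
    (LinearEquiv.finrank_eq (Submodule.equivMapOfInjective L hLinj _)).symm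
  have h5 : finrank F2 (LinearMap.range B') + finrank F2 (LinearMap.ker B') = m := by
    have := LinearMap.finrank_range_add_finrank_ker B'
    rwa [finrank_eq_card_basis b, Fintype.card_fin] at this
  have h6 : (LinearMap.ker B').map V.subtype = V ⊓ B.orthogonal V := by
    ext x
    rw [Submodule.mem_map]
    constructor
    · rintro ⟨⟨y, hy⟩, hk, rfl⟩
      rw [LinearMap.mem_ker] at hk
      refine ⟨hy, ?_⟩
      intro z hz
      have : B' ⟨y, hy⟩ ⟨z, hz⟩ = 0 := by rw [hk]; rfl
      rw [hB'app] at this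
      show B z y = 0
      rw [hB, symp_symm]
      exact this
    · rintro ⟨hxV, hxO⟩
      refine ⟨⟨x, hxV⟩, ?_, rfl⟩
      rw [LinearMap.mem_ker]
      apply LinearMap.ext
      rintro ⟨w, hw⟩
      rw [hB'app]
      rw [LinearMap.zero_apply, hB, symp_symm]
      exact hxO w hw
  have h7 : finrank F2 (LinearMap.ker B') =
      finrank F2 (V ⊓ B.orthogonal V : Submodule F2 (V2 n)) := by
    have h7' := Submodule.finrank_map_subtype_eq V (LinearMap.ker B')
    rw [h6] at h7'
    exact h7'.symm
  rw [show (Matrix.of fun i j => sympBilin n (b i : V2 n) (b j : V2 n)).rank = M.rank from rfl]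
  rw [hrank, h2, h3, h4, ← h7]
  exact h5


lemma single_dot (n : ℕ) (a b : Fin n) :
    ∑ i, (Pi.single a 1 : Fin n → F2) i * (Pi.single b 1 : Fin n → F2) i = if a = b then 1 else 0 := by
  rw [Finset.sum_eq_single a]
  · simp [Pi.single_apply, eq_comm]
  · intro j _ hj; simp [Pi.single_apply, Ne.symm hj]
  · simp

lemma symp_ee (n : ℕ) (x y : Fin n → F2) : sympBilin n (x, 0) (y, 0) = 0 := by
  rw [symp_apply]; simp

lemma symp_ff (n : ℕ) (x y : Fin n → F2) : sympBilin n (0, x) (0, y) = 0 := by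
  rw [symp_apply]; simp

lemma symp_ef (n : ℕ) (x y : Fin n → F2) : sympBilin n (x, 0) (0, y) = ∑ i, x i * y i := by
  rw [symp_apply]; simp

lemma symp_fe (n : ℕ) (x y : Fin n → F2) : sympBilin n (0, x) (y, 0) = ∑ i, y i * x i := by
  rw [symp_apply]
  simp [mul_comm]

lemma card_support (m c d : ℕ) (hcd : c ≤ d) (hm : d + c = m) :
    Fintype.card {i : Fin m // (i:ℕ) < c ∨ d ≤ (i:ℕ)} = 2 * c := by
  have e : {i : Fin m // (i:ℕ) < c ∨ d ≤ (i:ℕ)} ≃ (Fin c ⊕ Fin c) :=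
    { toFun := fun x => if h : (x.1 : ℕ) < c then Sum.inl ⟨x.1, h⟩
        else Sum.inr ⟨(x.1 : ℕ) - d, by
          have := x.2; have := x.1.2; omega⟩
      invFun := fun y => match y with
        | Sum.inl j => ⟨⟨j.1, by omega⟩, Or.inl j.2⟩
        | Sum.inr j => ⟨⟨j.1 + d, by omega⟩, Or.inr (Nat.le_add_left d j.1)⟩
      left_inv := fun x => by
        by_cases h : (x.1 : ℕ) < c
        · simp only [dif_pos h]
        · simp only [dif_neg h]
          have := x.2
          apply Subtype.ext
          apply Fin.ext
          simp only
          omega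
      right_inv := fun y => by
        match y with
        | Sum.inl j => simp
        | Sum.inr j =>
          have : ¬ ((⟨j.1 + d, by omega⟩ : Fin m) : ℕ) < c := by simp; omega
          simp only [dif_neg this]
          congr 1
          apply Fin.ext
          simp }
  rw [Fintype.card_congr e]
  simp [Fintype.card_sum]
  omega

lemma exists_typeS (n m c : ℕ) (h1 : 2*c ≤ m) (h2 : m ≤ n + c) :
    ∃ V : Submodule F2 (V2 n), IsTypeS n m c V := by
  set d := m - c with hdd
  have hcd : c ≤ d := by omega
  have hdn : d ≤ n := by omega
  have hm : d + c = m := by omega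
  set ι : Fin m → (Fin n) ⊕ (Fin n) := fun i =>
    if h : (i : ℕ) < d then Sum.inl ⟨i, by omega⟩ else Sum.inr ⟨(i:ℕ) - d, by
      have := i.2; omega⟩ with hι
  have hιinj : Function.Injective ι := by
    intro i j hij
    rw [hι] at hij
    dsimp only at hij
    by_cases hi : (i:ℕ) < d <;> by_cases hj : (j:ℕ) < d
    · rw [dif_pos hi, dif_pos hj] at hij
      injection hij with h2
      have h3 := congrArg Fin.val h2
      exact Fin.ext h3
    · rw [dif_pos hi, dif_neg hj] at hij
      simp at hij
    · rw [dif_neg hi, dif_pos hj] at hij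
      simp at hij
    · rw [dif_neg hi, dif_neg hj] at hij
      injection hij with h2
      have h3 := congrArg Fin.val h2
      simp only [Fin.val_mk] at h3
      exact Fin.ext (by omega)
  set bb : Basis ((Fin n) ⊕ (Fin n)) F2 (V2 n) :=
    (Pi.basisFun F2 (Fin n)).prod (Pi.basisFun F2 (Fin n)) with hbb
  have hbbl : ∀ a : Fin n, bb (Sum.inl a) = ((Pi.single a 1 : Fin n → F2), (0 : Fin n → F2)) := by
    intro a
    apply Prod.ext
    · rw [hbb, Basis.prod_apply_inl_fst, Pi.basisFun_apply]
    · rw [hbb, Basis.prod_apply_inl_snd]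
  have hbbr : ∀ a : Fin n, bb (Sum.inr a) = ((0 : Fin n → F2), (Pi.single a 1 : Fin n → F2)) := by
    intro a
    apply Prod.ext
    · rw [hbb, Basis.prod_apply_inr_fst]
    · rw [hbb, Basis.prod_apply_inr_snd, Pi.basisFun_apply]
  set g : Fin m → V2 n := bb ∘ ι with hg
  have li : LinearIndependent F2 g := bb.linearIndependent.comp ι hιinj
  refine ⟨span F2 (Set.range g), ?_, Basis.span li, ?_⟩
  · rw [finrank_span_eq_card li, Fintype.card_fin]
  · -- Gram matrix rank
    have hbs : ∀ i, ((Basis.span li i : span F2 (Set.range g)) : V2 n) = g i :=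
      fun i => congrArg Subtype.val (Basis.span_apply li i)
    set M : Matrix (Fin m) (Fin m) F2 :=
      Matrix.of fun i j => (if ((i:ℕ)+d = (j:ℕ) ∨ (j:ℕ)+d = (i:ℕ)) then (1:F2) else 0) with hMdef
    have hMval : ∀ (a b : Fin m),
        M a b = if ((a:ℕ)+d = (b:ℕ) ∨ (b:ℕ)+d = (a:ℕ)) then (1:F2) else 0 := fun a b => rfl
    have hgram : (Matrix.of fun i j =>
        sympBilin n ((Basis.span li i : span F2 (Set.range g)) : V2 n)
          ((Basis.span li j : span F2 (Set.range g)) : V2 n)) = M := by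
      ext i j
      rw [Matrix.of_apply, hbs i, hbs j, hMval]
      rw [hg]
      simp only [Function.comp_apply]
      rw [hι]
      dsimp only
      by_cases hi : (i:ℕ) < d <;> by_cases hj : (j:ℕ) < d
      · rw [dif_pos hi, dif_pos hj, hbbl, hbbl, symp_ee]
        rw [if_neg (show ¬((i:ℕ)+d = (j:ℕ) ∨ (j:ℕ)+d = (i:ℕ)) by omega)]
      · rw [dif_pos hi, dif_neg hj, hbbl, hbbr, symp_ef, single_dot]
        simp only [Fin.mk.injEq]
        by_cases hc : (i:ℕ) = (j:ℕ) - d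
        · rw [if_pos hc, if_pos (show ((i:ℕ)+d = (j:ℕ) ∨ (j:ℕ)+d = (i:ℕ)) by omega)]
        · rw [if_neg hc, if_neg (show ¬((i:ℕ)+d = (j:ℕ) ∨ (j:ℕ)+d = (i:ℕ)) by omega)]
      · rw [dif_neg hi, dif_pos hj, hbbr, hbbl, symp_fe, single_dot]
        simp only [Fin.mk.injEq]
        by_cases hc : (j:ℕ) = (i:ℕ) - d
        · rw [if_pos hc, if_pos (show ((i:ℕ)+d = (j:ℕ) ∨ (j:ℕ)+d = (i:ℕ)) by omega)]
        · rw [if_neg hc, if_neg (show ¬((i:ℕ)+d = (j:ℕ) ∨ (j:ℕ)+d = (i:ℕ)) by omega)]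
      · rw [dif_neg hi, dif_neg hj, hbbr, hbbr, symp_ff]
        have := i.2
        have := j.2
        rw [if_neg (show ¬((i:ℕ)+d = (j:ℕ) ∨ (j:ℕ)+d = (i:ℕ)) by omega)]
    rw [hgram]
    -- now compute the rank of M
    set w : Fin m → F2 := fun i => if ((i:ℕ) < c ∨ d ≤ (i:ℕ)) then 1 else 0 with hw
    have hwv : ∀ a : Fin m, w a = if ((a:ℕ) < c ∨ d ≤ (a:ℕ)) then (1:F2) else 0 := fun _ => rfl
    have hMM : M * M = Matrix.diagonal w := by
      ext i k
      rw [Matrix.mul_apply, Matrix.diagonal_apply]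
      have hkm := k.2
      have him := i.2
      by_cases hic : (i:ℕ) < c
      · have hpm : (i:ℕ) + d < m := by omega
        rw [Finset.sum_eq_single (⟨(i:ℕ)+d, hpm⟩ : Fin m)]
        · have e1 : M i ⟨(i:ℕ)+d, hpm⟩ = 1 := (hMval _ _).trans (if_pos (Or.inl rfl))
          have e2 : M ⟨(i:ℕ)+d, hpm⟩ k = if ((k:ℕ) = (i:ℕ)) then 1 else 0 := by
            rw [hMval]
            by_cases hk : (k:ℕ) = (i:ℕ)
            · rw [if_pos hk,
                if_pos (show ((⟨(i:ℕ)+d, hpm⟩ : Fin m):ℕ)+d = (k:ℕ) ∨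
                  (k:ℕ)+d = ((⟨(i:ℕ)+d, hpm⟩ : Fin m):ℕ) from Or.inr (by
                    simp only [Fin.val_mk]; omega))]
            · rw [if_neg hk, if_neg]
              rintro (h | h) <;> (simp only [Fin.val_mk] at h; omega)
          rw [e1, e2, one_mul]
          by_cases hik : i = k
          · subst hik
            rw [if_pos rfl, if_pos rfl, hwv, if_pos (Or.inl hic)]
          · rw [if_neg (fun h => hik (Fin.ext (id h.symm : (i:ℕ) = (k:ℕ)))), if_neg hik]
        · intro j _ hj
          rw [hMval, if_neg, zero_mul]
          rintro (h | h)
          · exact hj (Fin.ext (by simp only [Fin.val_mk]; omega))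
          · omega
        · intro h
          exact absurd (Finset.mem_univ _) h
      · by_cases hid : d ≤ (i:ℕ)
        · have hpm : (i:ℕ) - d < m := by omega
          have hpc : (i:ℕ) - d < c := by omega
          rw [Finset.sum_eq_single (⟨(i:ℕ)-d, hpm⟩ : Fin m)]
          · have e1 : M i ⟨(i:ℕ)-d, hpm⟩ = 1 :=
              (hMval _ _).trans (if_pos (Or.inr (by simp only [Fin.val_mk]; omega)))
            have e2 : M ⟨(i:ℕ)-d, hpm⟩ k = if ((k:ℕ) = (i:ℕ)) then 1 else 0 := by
              rw [hMval]
              by_cases hk : (k:ℕ) = (i:ℕ)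
              · rw [if_pos hk,
                  if_pos (show ((⟨(i:ℕ)-d, hpm⟩ : Fin m):ℕ)+d = (k:ℕ) ∨
                    (k:ℕ)+d = ((⟨(i:ℕ)-d, hpm⟩ : Fin m):ℕ) from Or.inl (by
                      simp only [Fin.val_mk]; omega))]
              · rw [if_neg hk, if_neg]
                rintro (h | h) <;> (simp only [Fin.val_mk] at h; omega)
            rw [e1, e2, one_mul]
            by_cases hik : i = k
            · subst hik
              rw [if_pos rfl, if_pos rfl, hwv, if_pos (Or.inr hid)]
            · rw [if_neg (fun h => hik (Fin.ext (id h.symm : (i:ℕ) = (k:ℕ)))), if_neg hik]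
          · intro j _ hj
            rw [hMval, if_neg, zero_mul]
            rintro (h | h)
            · omega
            · exact hj (Fin.ext (by simp only [Fin.val_mk]; omega))
          · intro h
            exact absurd (Finset.mem_univ _) h
        · rw [Finset.sum_eq_zero]
          · by_cases hik : i = k
            · subst hik
              rw [if_pos rfl, hwv, if_neg (by omega)]
            · rw [if_neg hik]
          · intro j _
            have := j.2
            rw [hMval, if_neg (by omega), zero_mul]
    have hMD : M * Matrix.diagonal w = M := by
      ext i j
      have him := i.2
      have hjm := j.2
      rw [Matrix.mul_diagonal]
      by_cases hwj : (j:ℕ) < c ∨ d ≤ (j:ℕ)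
      · rw [hwv, if_pos hwj, mul_one]
      · rw [hwv, if_neg hwj, mul_zero, hMval, if_neg (by omega)]
    have hr1 : M.rank ≤ (Matrix.diagonal w).rank := by
      conv_lhs => rw [← hMD]
      exact Matrix.rank_mul_le_right M (Matrix.diagonal w)
    have hr2 : (Matrix.diagonal w).rank ≤ M.rank := by
      rw [← hMM]
      exact Matrix.rank_mul_le_left M M
    have hr3 : (Matrix.diagonal w).rank = 2 * c := by
      rw [Matrix.rank_diagonal]
      rw [Fintype.card_congr (Equiv.subtypeEquivRight (q := fun i : Fin m =>
        (i:ℕ) < c ∨ d ≤ (i:ℕ)) (fun i => by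
          rw [hwv]
          by_cases h : (i:ℕ) < c ∨ d ≤ (i:ℕ)
          · rw [if_pos h]
            simp [h]
          · rw [if_neg h]
            simp [h]))]
      exact card_support m c d hcd hm
    omega


end Aux

/-- a subspace of type `(m, c)_{[s]}` exists in `F₂^{2n}` (for `n ≥ 1`)
if and only if `2c ≤ m ≤ n + c`. -/
theorem stmt1 (n m c : ℕ) (hn : 1 ≤ n) :
    (∃ V : Submodule F2 (V2 n), IsTypeS n m c V) ↔ 2 * c ≤ m ∧ m ≤ n + c := by
  constructor
  · rintro ⟨V, hfr, b, hrank⟩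
    have hg := gram_rank n m V b
    rw [hrank] at hg
    refine ⟨by omega, ?_⟩
    obtain ⟨W, hWV, hWiso, hWbd⟩ := exists_isotropic n V
    have hWn := isotropic_le n W hWiso
    rw [hfr] at hWbd
    omega
  · rintro ⟨h1, h2⟩
    exact exists_typeS n m c h1 h2
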